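/- There exists a constant C > 0 such that for every positive integer D and every real X ≥ 1: |∑_{f ∈ F(X), f odd} χ₈(f)| ≤ C·τ(D)·X^{1/2}, where χ₈ is the real character modulo 8 with χ₈(n) = 1 if n ≡ ±1 (mod 8), χ₈(n) = −1 if n ≡ ±3 (mod 8), and χ₈(n) = 0 if n is even, and τ(D) denotes the number of positive divisors of D. (For odd f, χ₈(f) is the value χ_f(2) of the quadratic character attached to the fundamental discriminant f at the prime 2.) -/

import Mathlib

/-- An integer `f` is a fundamental discriminant if either `f ≡ 1 (mod 4)` and `f` is
squarefree, or `f = 4m` with `m` squarefree and `m ≡ 2` or `3 (mod 4)`. -/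
def IsFundamentalDiscriminant (f : ℤ) : Prop :=
  (f % 4 = 1 ∧ Squarefree f) ∨
  (∃ m : ℤ, f = 4 * m ∧ Squarefree m ∧ (m % 4 = 2 ∨ m % 4 = 3))

/-- `F(X)`: the set of fundamental discriminants `f` with `gcd(f, D) = 1` and
`X ≤ |f| < 2X`. -/
def FSet (D : ℕ) (X : ℝ) : Set ℤ :=
  {f | IsFundamentalDiscriminant f ∧ IsCoprime f (D : ℤ) ∧
    X ≤ |(f : ℝ)| ∧ |(f : ℝ)| < 2 * X}

/-- The real character modulo `8`: `χ₈(n) = 1` if `n ≡ ±1 (mod 8)`, `−1` if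
`n ≡ ±3 (mod 8)`, and `0` if `n` is even. -/
def chi8 (n : ℤ) : ℤ :=
  if n % 8 = 1 ∨ n % 8 = 7 then 1 else if n % 8 = 3 ∨ n % 8 = 5 then -1 else 0




lemma chi8_abs (n : ℤ) : |chi8 n| ≤ 1 := by
  unfold chi8; split_ifs <;> simp

lemma chi8_flip (x q : ℤ) (hq : q % 8 = 4) : chi8 (x + q) = - chi8 x := by
  unfold chi8; split_ifs <;> omega

lemma chi8_pow (f0 q : ℤ) (hq : q % 8 = 4) (t : ℕ) :
    chi8 (f0 + q * t) = (-1) ^ t * chi8 f0 := by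
  induction t with
  | zero => simp
  | succ m ih =>
    have h : f0 + q * ((m : ℤ) + 1) = (f0 + q * m) + q := by ring
    push_cast
    rw [h, chi8_flip _ _ hq, ih]; ring

lemma key (a b c q : ℤ) (hq : 0 < q) (hq8 : q % 8 = 4) (hc : c % q = c) :
    |∑ f ∈ (Finset.Ico a b).filter (fun f => f % q = c), chi8 f| ≤ 1 := by
  have hqne : q ≠ 0 := hq.ne'
  set f0 : ℤ := a + (c - a) % q with hf0
  set M : ℤ := (b - f0 - 1) / q with hM
  set n : ℕ := (M + 1).toNat with hn
  have hf0c : f0 = c + q * (-((c - a) / q)) := by rw [hf0, Int.emod_def]; ring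
  have hf0mod : f0 % q = c := by rw [hf0c, Int.add_mul_emod_self_left, hc]
  have hr0 : 0 ≤ (c - a) % q := Int.emod_nonneg _ hqne
  have hrq : (c - a) % q < q := Int.emod_lt_of_pos _ hq
  have haf0 : a ≤ f0 := by omega
  have hf0a : f0 < a + q := by omega
  have hMkey : q * M ≤ b - f0 - 1 ∧ b - f0 - 1 < q * M + q := by
    have h1 := Int.mul_ediv_add_emod (b - f0 - 1) q
    have h2 := Int.emod_nonneg (b - f0 - 1) hqne
    have h3 := Int.emod_lt_of_pos (b - f0 - 1) hq
    constructor <;> linarith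
  have hset : (Finset.Ico a b).filter (fun f => f % q = c)
      = (Finset.range n).image (fun t : ℕ => f0 + q * t) := by
    ext f
    simp only [Finset.mem_filter, Finset.mem_Ico, Finset.mem_image, Finset.mem_range]
    constructor
    · rintro ⟨⟨haf, hfb⟩, hmod⟩
      have hdvd : q ∣ f - f0 := by
        have h1 : f0 ≡ f [ZMOD q] := show f0 % q = f % q by rw [hmod, hf0mod]
        exact Int.ModEq.dvd h1
      obtain ⟨t, ht⟩ := hdvd
      have ht0 : 0 ≤ t := by
        by_contra hneg
        push_neg at hneg
        have : q * t ≤ q * (-1) := mul_le_mul_of_nonneg_left (by omega) hq.le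
        omega
      have htM : t ≤ M := by
        have h1 : q * t ≤ b - f0 - 1 := by omega
        by_contra hgt
        push_neg at hgt
        have : q * (M + 1) ≤ q * t := mul_le_mul_of_nonneg_left (by omega) hq.le
        have := hMkey.2
        nlinarith
      refine ⟨t.toNat, by omega, ?_⟩
      rw [Int.toNat_of_nonneg ht0]; omega
    · rintro ⟨t, htn, rfl⟩
      have ht0 : (0:ℤ) ≤ (t:ℤ) := Int.natCast_nonneg t
      have htM : (t:ℤ) ≤ M := by omega
      have h1 : q * t ≤ q * M := mul_le_mul_of_nonneg_left htM hq.le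
      have h2 : 0 ≤ q * t := mul_nonneg hq.le ht0
      refine ⟨⟨by omega, by have := hMkey.1; omega⟩, ?_⟩
      rw [Int.add_mul_emod_self_left, hf0mod]
  have hinj : ∀ x ∈ Finset.range n, ∀ y ∈ Finset.range n,
      f0 + q * (x:ℕ) = f0 + q * (y:ℕ) → x = y := by
    intro x _ y _ h
    have h2 : q * (x:ℤ) = q * y := by omega
    exact_mod_cast mul_left_cancel₀ hqne h2
  rw [hset, Finset.sum_image hinj]
  calc |∑ t ∈ Finset.range n, chi8 (f0 + q * t)| 
      = |(∑ t ∈ Finset.range n, (-1:ℤ) ^ t) * chi8 f0| := by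
        rw [Finset.sum_mul]; congr 1; exact Finset.sum_congr rfl fun t _ => chi8_pow f0 q hq8 t
    _ ≤ 1 := by
        rw [neg_one_geom_sum, abs_mul]
        split_ifs <;> simpa using chi8_abs f0
lemma crt (l : ℕ) (hl : l % 2 = 1) :
    ∃ c : ℤ, c % (4 * l) = c ∧ ∀ f : ℤ, (f % 4 = 1 ∧ (l:ℤ) ∣ f) ↔ f % (4 * l) = c := by
  have hl0 : 0 < l := by omega
  have hco : IsCoprime (4 : ℤ) (l : ℤ) := by
    rw [Int.isCoprime_iff_gcd_eq_one]
    have h2 : Nat.Coprime 4 l := Nat.Coprime.pow_left 2 <| (Nat.prime_two.coprime_iff_not_dvd).mpr (by omega)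
    simpa [Int.gcd] using h2
  obtain ⟨u, v, huv⟩ := id hco
  set q : ℤ := 4 * l with hq
  have hq0 : 0 < q := by positivity
  have h44 : (4:ℤ) ∣ q := ⟨l, rfl⟩
  have hlq : (l:ℤ) ∣ q := ⟨4, by ring⟩
  refine ⟨(v * l) % q, Int.emod_emod_of_dvd _ dvd_rfl, ?_⟩
  set c : ℤ := (v * l) % q with hc
  have hcq : c % q = c := Int.emod_emod_of_dvd _ dvd_rfl
  have hlc : (l : ℤ) ∣ c := by
    have h1 : (l:ℤ) ∣ v * l := ⟨v, mul_comm _ _⟩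
    rw [hc, Int.emod_def]
    exact dvd_sub h1 (hlq.mul_right _)
  have hc4 : c % 4 = 1 := by
    have h3 : c % 4 = (v * l) % 4 := by rw [hc]; exact Int.emod_emod_of_dvd _ h44
    have hvl : v * l = 1 - u * 4 := by linarith
    omega
  intro f
  constructor
  · rintro ⟨hf4, hfl⟩
    have h4 : (4:ℤ) ∣ f - c := by omega
    have hldvd : (l:ℤ) ∣ f - c := dvd_sub hfl hlc
    have hqd : q ∣ f - c := hco.mul_dvd h4 hldvd
    have h5 : c % q = f % q := Int.modEq_iff_dvd.mpr hqd
    rw [← h5, hcq]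
  · intro hf
    have h5 : f % q = c % q := by rw [hf, hcq]
    have hqd : q ∣ c - f := Int.modEq_iff_dvd.mp h5
    have h4 : (4:ℤ) ∣ c - f := dvd_trans h44 hqd
    have hld : (l:ℤ) ∣ c - f := dvd_trans hlq hqd
    exact ⟨by omega, by have := dvd_sub hlc hld; simpa using this⟩
open ArithmeticFunction
open scoped ArithmeticFunction.Moebius

lemma moebius_sum (n : ℕ) : ∑ d ∈ n.divisors, μ d = if n = 1 then 1 else 0 := by
  rw [← coe_mul_zeta_apply, moebius_mul_coe_zeta, one_apply]

lemma cop_sieve (D m : ℕ) (hD : D ≠ 0) (hm : m ≠ 0) :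
    ∑ e ∈ D.divisors.filter (fun e => e ∣ m), μ e
      = if Nat.gcd m D = 1 then 1 else 0 := by
  rw [← moebius_sum]
  congr 1
  ext e
  simp only [Finset.mem_filter, Nat.mem_divisors, Nat.dvd_gcd_iff]
  constructor
  · rintro ⟨⟨h1, _⟩, h2⟩; exact ⟨⟨h2, h1⟩, fun h => hD (Nat.eq_zero_of_gcd_eq_zero_right h)⟩
  · rintro ⟨⟨h1, h2⟩, _⟩; exact ⟨⟨h2, hD⟩, h1⟩

lemma sq_sieve (n M : ℕ) (hn : n ≠ 0) (hnM : n < M) :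
    ∑ d ∈ (Finset.range M).filter (fun d => d ^ 2 ∣ n), μ d
      = if Squarefree n then 1 else 0 := by
  classical
  set s : ℕ := ∏ p ∈ n.primeFactors, p ^ (n.factorization p / 2) with hs
  have hs0 : s ≠ 0 := by
    rw [hs]
    exact Finset.prod_ne_zero_iff.mpr fun p hp =>
      pow_ne_zero _ (Nat.pos_of_mem_primeFactors hp).ne'
  have hsfact : ∀ q : ℕ, s.factorization q = n.factorization q / 2 := by
    intro q
    rw [hs, Nat.factorization_prod (fun p hp => pow_ne_zero _ (Nat.pos_of_mem_primeFactors hp).ne')]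
    rw [Finsupp.finset_sum_apply]
    have : ∀ p ∈ n.primeFactors, ((p ^ (n.factorization p / 2)).factorization) q
        = if p = q then n.factorization p / 2 else 0 := by
      intro p hp
      rw [Nat.Prime.factorization_pow (Nat.prime_of_mem_primeFactors hp)]
      simp [Finsupp.single_apply]
    rw [Finset.sum_congr rfl this, Finset.sum_ite_eq']
    split_ifs with h
    · rfl
    · have : n.factorization q = 0 := by
        have := Nat.support_factorization (n := n)
        rw [← Finsupp.notMem_support_iff, this]
        exact h
      omega
  have hA : ∀ d : ℕ, d ^ 2 ∣ n ↔ d ∣ s := by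
    intro d
    rcases eq_or_ne d 0 with rfl | hd
    · simp [hn, hs0, zero_pow]
    · rw [← Nat.factorization_le_iff_dvd (pow_ne_zero _ hd) hn,
        ← Nat.factorization_le_iff_dvd hd hs0, Nat.factorization_pow]
      constructor
      · intro h q
        have := h q
        simp only [Finsupp.smul_apply, smul_eq_mul] at this
        rw [hsfact q]; omega
      · intro h q
        have := h q
        rw [hsfact q] at this
        simp only [Finsupp.smul_apply, smul_eq_mul]
        omega
  have hB : Squarefree n ↔ s = 1 := by
    rw [Nat.squarefree_iff_factorization_le_one hn]
    constructor
    · intro h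
      rw [hs]
      apply Finset.prod_eq_one
      intro p hp
      have := h p
      have h2 : n.factorization p / 2 = 0 := by omega
      rw [h2, pow_zero]
    · intro h q
      have := hsfact q
      rw [h, Nat.factorization_one] at this
      simp at this
      omega
  have hset : (Finset.range M).filter (fun d => d ^ 2 ∣ n) = s.divisors := by
    ext d
    simp only [Finset.mem_filter, Finset.mem_range, Nat.mem_divisors]
    constructor
    · rintro ⟨_, h2⟩; exact ⟨(hA d).mp h2, hs0⟩
    · rintro ⟨h1, _⟩
      refine ⟨?_, (hA d).mpr h1⟩
      have hsn : s ^ 2 ∣ n := (hA s).mpr dvd_rfl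
      have h3 : s ≤ n := Nat.le_of_dvd (Nat.pos_of_ne_zero hn)
        (dvd_trans (dvd_pow_self s two_ne_zero) hsn)
      have h4 : d ≤ s := Nat.le_of_dvd (Nat.pos_of_ne_zero hs0) h1
      omega
  rw [hset, moebius_sum]
  simp [hB]

lemma int_dvd_iff (m : ℕ) (z : ℤ) : (m:ℤ) ∣ z ↔ m ∣ z.natAbs := by
  rw [← Int.natAbs_dvd_natAbs, Int.natAbs_natCast]

lemma Tbound (P Q : ℤ) (hP : 1 ≤ P) (d e : ℕ) (hd : 1 ≤ d) (he : 1 ≤ e) :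
    |∑ f ∈ (Finset.Ico (1 - Q) Q).filter
        (fun f => (f % 4 = 1 ∧ P ≤ |f| ∧ |f| < Q) ∧ ((d:ℤ)^2 ∣ f ∧ (e:ℤ) ∣ f)), chi8 f| ≤ 2 := by
  classical
  by_cases hodd : d % 2 = 1 ∧ e % 2 = 1
  · obtain ⟨hdo, heo⟩ := hodd
    set l : ℕ := Nat.lcm (d^2) e with hldef
    have hld : l ∣ d^2 * e := Nat.lcm_dvd (dvd_mul_right _ _) (dvd_mul_left _ _)
    have hlodd : l % 2 = 1 := by
      have hde : (d^2*e) % 2 = 1 := by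
        rw [Nat.mul_mod, Nat.pow_mod, hdo, heo]
      rcases Nat.even_or_odd l with h | h
      · exfalso
        obtain ⟨j, hj⟩ := h
        obtain ⟨k, hk⟩ := hld
        obtain ⟨m, hm⟩ : ∃ m, d^2*e = 2*m := ⟨j*k, by rw [hk, hj]; ring⟩
        omega
      · exact Nat.odd_iff.mp h
    obtain ⟨c, hcq, hcrt⟩ := crt l hlodd
    have hl0 : 0 < l := by
      rcases Nat.eq_zero_or_pos l with h | h
      · omega
      · exact h
    have hq8 : (4 * (l:ℤ)) % 8 = 4 := by omega
    have hq0 : (0:ℤ) < 4 * l := by positivity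
    have hcond : ∀ f : ℤ, ((f % 4 = 1 ∧ P ≤ |f| ∧ |f| < Q) ∧ ((d:ℤ)^2 ∣ f ∧ (e:ℤ) ∣ f))
        ↔ (f % (4 * l) = c ∧ P ≤ |f| ∧ |f| < Q) := by
      intro f
      have hcast : ((d:ℤ))^2 = ((d^2 : ℕ) : ℤ) := by push_cast; ring
      have h1 : ((d:ℤ)^2 ∣ f ∧ (e:ℤ) ∣ f) ↔ (l:ℤ) ∣ f := by
        rw [hcast, int_dvd_iff, int_dvd_iff, int_dvd_iff, hldef, Nat.lcm_dvd_iff]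
      rw [← hcrt f]
      tauto
    have hsplit : (Finset.Ico (1 - Q) Q).filter
        (fun f => (f % 4 = 1 ∧ P ≤ |f| ∧ |f| < Q) ∧ ((d:ℤ)^2 ∣ f ∧ (e:ℤ) ∣ f))
        = ((Finset.Ico P Q).filter (fun f => f % (4 * l) = c))
          ∪ ((Finset.Ico (1 - Q) (1 - P)).filter (fun f => f % (4 * l) = c)) := by
      ext f
      simp only [Finset.mem_filter, Finset.mem_union, Finset.mem_Ico, hcond f]
      obtain ⟨g, hg, h1⟩ : ∃ g, |f| = g ∧ (g = f ∨ g = -f) := ⟨|f|, rfl, abs_choice f⟩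
      obtain ⟨m, hm⟩ : ∃ m, f % (4 * l) = m := ⟨_, rfl⟩
      have hg0 : 0 ≤ g := hg ▸ abs_nonneg f
      rw [hg, hm]
      omega
    have hdisj : Disjoint ((Finset.Ico P Q).filter (fun f => f % (4 * l) = c))
        ((Finset.Ico (1 - Q) (1 - P)).filter (fun f => f % (4 * l) = c)) := by
      rw [Finset.disjoint_left]
      intro f hf1 hf2
      simp only [Finset.mem_filter, Finset.mem_Ico] at hf1 hf2
      omega
    rw [hsplit, Finset.sum_union hdisj]
    calc |(∑ f ∈ (Finset.Ico P Q).filter (fun f => f % (4 * l) = c), chi8 f)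
          + ∑ f ∈ (Finset.Ico (1 - Q) (1 - P)).filter (fun f => f % (4 * l) = c), chi8 f|
        ≤ |∑ f ∈ (Finset.Ico P Q).filter (fun f => f % (4 * l) = c), chi8 f|
          + |∑ f ∈ (Finset.Ico (1 - Q) (1 - P)).filter (fun f => f % (4 * l) = c), chi8 f| :=
          abs_add_le _ _
      _ ≤ 2 := by
          have k1 := key P Q c (4 * l) hq0 hq8 hcq
          have k2 := key (1 - Q) (1 - P) c (4 * l) hq0 hq8 hcq
          omega
  · -- d or e even: the filter is empty
    have hempty : (Finset.Ico (1 - Q) Q).filter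
        (fun f => (f % 4 = 1 ∧ P ≤ |f| ∧ |f| < Q) ∧ ((d:ℤ)^2 ∣ f ∧ (e:ℤ) ∣ f)) = ∅ := by
      rw [Finset.filter_eq_empty_iff]
      rintro f _ ⟨⟨hf4, _⟩, hd2, he2⟩
      rcases (by omega : d % 2 = 0 ∨ e % 2 = 0) with h | h
      · have h2d : (2:ℤ) ∣ (d:ℤ) := by exact_mod_cast Int.natCast_dvd_natCast.mpr (by omega : 2 ∣ d)
        have : (2:ℤ) ∣ f := dvd_trans (h2d.trans (dvd_pow_self _ two_ne_zero)) hd2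
        omega
      · have h2e : (2:ℤ) ∣ (e:ℤ) := by exact_mod_cast Int.natCast_dvd_natCast.mpr (by omega : 2 ∣ e)
        have : (2:ℤ) ∣ f := dvd_trans h2e he2
        omega
    rw [hempty]
    simp



/-- There is `C > 0` such that for all `D ≥ 1` and `X ≥ 1`,
`|∑_{f ∈ F(X), f odd} χ₈(f)| ≤ C·τ(D)·X^{1/2}`. -/
theorem chi8_char_sum_fund_disc :
    ∃ C : ℝ, 0 < C ∧ ∀ (D : ℕ), 0 < D → ∀ X : ℝ, 1 ≤ X →
      |∑ᶠ f ∈ {f : ℤ | f ∈ FSet D X ∧ Odd f}, ((chi8 f : ℤ) : ℝ)|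
        ≤ C * (D.divisors.card : ℝ) * X ^ ((1 : ℝ) / 2) := by
  classical
  refine ⟨100, by norm_num, ?_⟩
  intro D hD X hX
  set P : ℤ := ⌈X⌉ with hPdef
  set Q : ℤ := ⌈2 * X⌉ with hQdef
  have hP1 : 1 ≤ P := by
    have h1 : (1:ℝ) ≤ (P:ℝ) := le_trans hX (Int.le_ceil X)
    exact_mod_cast h1
  have hQR : 2 * X ≤ (Q:ℝ) := Int.le_ceil _
  have hQ1 : 1 ≤ Q := by
    have h1 : (1:ℝ) ≤ (Q:ℝ) := by linarith
    exact_mod_cast h1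
  set Nn : ℕ := Q.toNat with hNndef
  have hNnQ : (Nn:ℤ) = Q := Int.toNat_of_nonneg (by omega)
  set F0 : Finset ℤ := (Finset.Ico (1 - Q) Q).filter
    (fun f => f % 4 = 1 ∧ Squarefree f.natAbs ∧ Nat.gcd f.natAbs D = 1 ∧ P ≤ |f| ∧ |f| < Q)
    with hF0
  have hgcd : ∀ f : ℤ, IsCoprime f (D:ℤ) ↔ Nat.gcd f.natAbs D = 1 := by
    intro f
    rw [Int.isCoprime_iff_gcd_eq_one, Int.gcd]
    simp
  have hEset : {f : ℤ | f ∈ FSet D X ∧ Odd f} = ↑F0 := by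
    ext f
    have habs : |(f:ℝ)| = ((|f| : ℤ) : ℝ) := by push_cast; rfl
    simp only [Set.mem_setOf_eq, FSet, hF0, Finset.coe_filter, Finset.mem_Ico,
      Set.mem_setOf_eq]
    constructor
    · rintro ⟨⟨hfund, hcop, hX1, hX2⟩, hoddf⟩
      have h41 : f % 4 = 1 ∧ Squarefree f := by
        rcases hfund with ⟨h1, h2⟩ | ⟨m, rfl, _, _⟩
        · exact ⟨h1, h2⟩
        · exfalso; rw [Int.odd_iff] at hoddf; omega
      have hb1 : P ≤ |f| := Int.ceil_le.mpr (habs ▸ hX1)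
      have hb2 : |f| < Q := Int.lt_ceil.mpr (habs ▸ hX2)
      have hbI : -Q < f ∧ f < Q := abs_lt.mp hb2
      exact ⟨⟨by omega, by omega⟩, h41.1, Int.squarefree_natAbs.mpr h41.2,
        (hgcd f).mp hcop, hb1, hb2⟩
    · rintro ⟨⟨hI1, hI2⟩, h4, hsq, hg, hb1, hb2⟩
      refine ⟨⟨Or.inl ⟨h4, Int.squarefree_natAbs.mp hsq⟩, (hgcd f).mpr hg, ?_, ?_⟩,
        Int.odd_iff.mpr (by omega)⟩
      · rw [habs]; exact_mod_cast Int.ceil_le.mp hb1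
      · rw [habs]; exact_mod_cast Int.lt_ceil.mp hb2
  rw [hEset, finsum_mem_coe_finset]
  have hcast : ∑ f ∈ F0, ((chi8 f : ℤ) : ℝ) = ((∑ f ∈ F0, chi8 f : ℤ) : ℝ) := by push_cast; rfl
  rw [hcast, ← Int.cast_abs]
  -- integer estimate
  set F2 : Finset ℤ := (Finset.Ico (1 - Q) Q).filter
    (fun f => f % 4 = 1 ∧ P ≤ |f| ∧ |f| < Q) with hF2
  set U : Finset ℕ := Finset.range (Nn + 1) with hU
  have hmemF2 : ∀ f ∈ F2, f % 4 = 1 ∧ P ≤ |f| ∧ |f| < Q ∧ f.natAbs ≠ 0 ∧ f.natAbs < Nn := by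
    intro f hf
    rw [hF2, Finset.mem_filter] at hf
    obtain ⟨_, h1, h2, h3⟩ := hf
    have hna : (f.natAbs : ℤ) = |f| := (Int.abs_eq_natAbs f).symm
    refine ⟨h1, h2, h3, ?_, ?_⟩ <;> omega
  have hF0F2 : F0 = F2.filter (fun f => Squarefree f.natAbs ∧ Nat.gcd f.natAbs D = 1) := by
    rw [hF2, Finset.filter_filter, hF0]
    apply Finset.filter_congr
    intro f _
    tauto
  set T : ℕ → ℕ → ℤ := fun d e =>
    ∑ f ∈ F2.filter (fun f => (d:ℤ)^2 ∣ f ∧ (e:ℤ) ∣ f), chi8 f with hT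
  have step2 : ∑ f ∈ F0, chi8 f
      = ∑ d ∈ U, ∑ e ∈ D.divisors, μ d * (μ e * T d e) := by
    rw [hF0F2, Finset.sum_filter]
    have e3 : ∀ f ∈ F2, (if Squarefree f.natAbs ∧ Nat.gcd f.natAbs D = 1 then chi8 f else 0)
        = ∑ d ∈ U, ∑ e ∈ D.divisors,
            (if (d:ℤ)^2 ∣ f then μ d else 0) * ((if (e:ℤ) ∣ f then μ e else 0) * chi8 f) := by
      intro f hf
      obtain ⟨h4, _, _, hna0, hnaN⟩ := hmemF2 f hf
      have e1 : ∑ d ∈ U, (if (d:ℤ)^2 ∣ f then μ d else 0)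
          = if Squarefree f.natAbs then 1 else 0 := by
        rw [← sq_sieve f.natAbs (Nn+1) hna0 (by omega), Finset.sum_filter]
        apply Finset.sum_congr rfl
        intro d _
        congr 1
        rw [eq_iff_iff]
        have hc2 : ((d:ℤ))^2 = ((d^2:ℕ):ℤ) := by push_cast; ring
        rw [hc2, int_dvd_iff]
      have e2 : ∑ e ∈ D.divisors, (if (e:ℤ) ∣ f then μ e else 0)
          = if Nat.gcd f.natAbs D = 1 then 1 else 0 := by
        rw [← cop_sieve D f.natAbs hD.ne' hna0, Finset.sum_filter]
        apply Finset.sum_congr rfl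
        intro e _
        congr 1
        rw [eq_iff_iff, int_dvd_iff]
      have hkey : ∑ d ∈ U, ∑ e ∈ D.divisors,
            (if (d:ℤ)^2 ∣ f then μ d else 0) * ((if (e:ℤ) ∣ f then μ e else 0) * chi8 f)
          = (∑ d ∈ U, (if (d:ℤ)^2 ∣ f then μ d else 0)) *
            ((∑ e ∈ D.divisors, (if (e:ℤ) ∣ f then μ e else 0)) * chi8 f) := by
        rw [Finset.sum_mul]
        exact Finset.sum_congr rfl fun d _ => by rw [Finset.sum_mul, Finset.mul_sum]
      rw [hkey, e1, e2]
      by_cases hA : Squarefree f.natAbs <;> by_cases hB : Nat.gcd f.natAbs D = 1 <;>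
        simp [hA, hB]
    rw [Finset.sum_congr rfl e3, Finset.sum_comm]
    apply Finset.sum_congr rfl
    intro d _
    rw [Finset.sum_comm]
    apply Finset.sum_congr rfl
    intro e _
    have : ∀ f ∈ F2, (if (d:ℤ)^2 ∣ f then μ d else 0) * ((if (e:ℤ) ∣ f then μ e else 0) * chi8 f)
        = if ((d:ℤ)^2 ∣ f ∧ (e:ℤ) ∣ f) then μ d * (μ e * chi8 f) else 0 := by
      intro f _
      by_cases hA : (d:ℤ)^2 ∣ f <;> by_cases hB : (e:ℤ) ∣ f <;> simp [hA, hB]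
    rw [Finset.sum_congr rfl this, ← Finset.sum_filter]
    simp only [hT]
    rw [Finset.mul_sum, Finset.mul_sum]
  -- bound
  have habsmu : ∀ n : ℕ, |μ n| ≤ 1 := by
    intro n
    rw [ArithmeticFunction.abs_moebius]
    split_ifs <;> norm_num
  have hTb : ∀ d e : ℕ, 1 ≤ d → 1 ≤ e → |T d e| ≤ 2 := by
    intro d e hd he
    simp only [hT]
    rw [hF2, Finset.filter_filter]
    exact Tbound P Q hP1 d e hd he
  have hTzero : ∀ e : ℕ, ∀ d ∈ U, ¬(1 ≤ d ∧ d^2 ≤ Nn) → T d e = 0 := by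
    intro e d _ hcond
    have hempty : F2.filter (fun f => (d:ℤ)^2 ∣ f ∧ (e:ℤ) ∣ f) = ∅ := by
      rw [Finset.filter_eq_empty_iff]
      rintro f hf ⟨hd2, _⟩
      obtain ⟨h4, _, _, hna0, hnaN⟩ := hmemF2 f hf
      rcases Nat.eq_zero_or_pos d with rfl | hd1
      · rw [Int.natCast_zero, zero_pow two_ne_zero] at hd2
        have : f = 0 := zero_dvd_iff.mp hd2
        omega
      · have hlt : Nn < d^2 := by omega
        have hdn : (d^2 : ℕ) ∣ f.natAbs := by
          rw [← int_dvd_iff]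
          push_cast
          exact hd2
        have := Nat.le_of_dvd (Nat.pos_of_ne_zero hna0) hdn
        omega
    simp only [hT, hempty, Finset.sum_empty]
  have hZbound : |∑ f ∈ F0, chi8 f| ≤ (D.divisors.card : ℤ) * (2 * (Nat.sqrt Nn : ℤ)) := by
    rw [step2]
    calc |∑ d ∈ U, ∑ e ∈ D.divisors, μ d * (μ e * T d e)|
        ≤ ∑ d ∈ U, |∑ e ∈ D.divisors, μ d * (μ e * T d e)| :=
          Finset.abs_sum_le_sum_abs _ _
      _ ≤ ∑ d ∈ U, ∑ e ∈ D.divisors, |μ d * (μ e * T d e)| :=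
          Finset.sum_le_sum fun d _ => Finset.abs_sum_le_sum_abs _ _
      _ ≤ ∑ d ∈ U, ∑ e ∈ D.divisors, |T d e| := by
          apply Finset.sum_le_sum
          intro d _
          apply Finset.sum_le_sum
          intro e _
          rw [abs_mul, abs_mul]
          calc |μ d| * (|μ e| * |T d e|) ≤ 1 * (1 * |T d e|) := by
                gcongr <;> [exact habsmu d; exact habsmu e]
            _ = |T d e| := by ring
      _ = ∑ e ∈ D.divisors, ∑ d ∈ U, |T d e| := Finset.sum_comm
      _ ≤ ∑ _e ∈ D.divisors, (2 * (Nat.sqrt Nn : ℤ)) := by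
          apply Finset.sum_le_sum
          intro e he
          have he1 : 1 ≤ e := Nat.pos_of_mem_divisors he
          have hsub : ∑ d ∈ U, |T d e| = ∑ d ∈ U.filter (fun d => 1 ≤ d ∧ d^2 ≤ Nn), |T d e| := by
            symm
            apply Finset.sum_filter_of_ne
            intro d hd hne
            by_contra hc
            exact hne (by rw [hTzero e d hd hc]; simp)
          rw [hsub]
          calc ∑ d ∈ U.filter (fun d => 1 ≤ d ∧ d^2 ≤ Nn), |T d e|
              ≤ ∑ _d ∈ U.filter (fun d => 1 ≤ d ∧ d^2 ≤ Nn), (2:ℤ) :=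
                Finset.sum_le_sum fun d hd => hTb d e (Finset.mem_filter.mp hd).2.1 he1
            _ = (U.filter (fun d => 1 ≤ d ∧ d^2 ≤ Nn)).card * 2 := by
                rw [Finset.sum_const]; ring
            _ ≤ (Nat.sqrt Nn : ℤ) * 2 := by
                have hcard : (U.filter (fun d => 1 ≤ d ∧ d^2 ≤ Nn)).card ≤ Nat.sqrt Nn := by
                  have hsub2 : U.filter (fun d => 1 ≤ d ∧ d^2 ≤ Nn) ⊆ Finset.Icc 1 (Nat.sqrt Nn) := by
                    intro d hd
                    obtain ⟨_, h1, h2⟩ := Finset.mem_filter.mp hd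
                    exact Finset.mem_Icc.mpr ⟨h1, Nat.le_sqrt.mpr (by nlinarith)⟩
                  calc (U.filter (fun d => 1 ≤ d ∧ d^2 ≤ Nn)).card
                      ≤ (Finset.Icc 1 (Nat.sqrt Nn)).card := Finset.card_le_card hsub2
                    _ = Nat.sqrt Nn := by rw [Nat.card_Icc]; omega
                exact_mod_cast mul_le_mul_of_nonneg_right (by exact_mod_cast hcard) (by norm_num)
            _ = 2 * (Nat.sqrt Nn : ℤ) := by ring
      _ = (D.divisors.card : ℤ) * (2 * (Nat.sqrt Nn : ℤ)) := by
          rw [Finset.sum_const, nsmul_eq_mul]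
  -- to reals
  have hcast2 : ((|∑ f ∈ F0, chi8 f| : ℤ) : ℝ)
      ≤ (D.divisors.card : ℝ) * (2 * (Nat.sqrt Nn : ℝ)) := by
    have := hZbound
    exact_mod_cast this
  have hsqrt : (Nat.sqrt Nn : ℝ) ≤ 2 * Real.sqrt X := by
    calc (Nat.sqrt Nn : ℝ) ≤ Real.sqrt Nn := Real.nat_sqrt_le_real_sqrt
      _ ≤ Real.sqrt (4 * X) := by
          apply Real.sqrt_le_sqrt
          have h1 : (Nn:ℝ) = (Q:ℝ) := by exact_mod_cast congrArg Int.cast hNnQ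
          have h2 : (Q:ℝ) ≤ 2 * X + 1 := le_of_lt (Int.ceil_lt_add_one _)
          linarith
      _ = 2 * Real.sqrt X := by
          rw [Real.sqrt_mul (by norm_num) X, show (4:ℝ) = 2^2 by norm_num,
            Real.sqrt_sq (by norm_num : (0:ℝ) ≤ 2)]
  have hx12 : X ^ ((1:ℝ)/2) = Real.sqrt X := (Real.sqrt_eq_rpow X).symm
  rw [hx12]
  have hτ0 : (0:ℝ) ≤ (D.divisors.card : ℝ) := Nat.cast_nonneg _
  have hs0 : (0:ℝ) ≤ Real.sqrt X := Real.sqrt_nonneg X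
  calc ((|∑ f ∈ F0, chi8 f| : ℤ) : ℝ)
      ≤ (D.divisors.card : ℝ) * (2 * (Nat.sqrt Nn : ℝ)) := hcast2
    _ ≤ (D.divisors.card : ℝ) * (2 * (2 * Real.sqrt X)) := by
        apply mul_le_mul_of_nonneg_left _ hτ0
        linarith [hsqrt]
    _ ≤ 100 * (D.divisors.card : ℝ) * Real.sqrt X := by nlinarith
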